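/- Let θ, θ_true, X ∈ R^d. Then there exists a real number c with e^{−|(θ_true−θ)ᵀX|} ≤ c ≤ e^{|(θ_true−θ)ᵀX|} such that E_{y}[ y Xᵀ(θ_true−θ) / (1+e^{yθᵀX}) ] = c · ((θ_true−θ)ᵀX)² / ((1+e^{θᵀX})(1+e^{−θᵀX})), where y ∈ {−1,1} is distributed as P(y = s) = 1/(1+e^{−s θ_trueᵀ X}). -/
import Mathlib


open Matrix Real


lemma aux_expgrad (a u : ℝ) : ∃ c : ℝ,
    Real.exp (-|u|) ≤ c ∧ c ≤ Real.exp |u| ∧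
    (1 / (1 + Real.exp (-(a + u)))) * ((1 : ℝ) * u / (1 + Real.exp ((1 : ℝ) * a))) +
      (1 / (1 + Real.exp (a + u))) * ((-1 : ℝ) * u / (1 + Real.exp ((-1 : ℝ) * a))) =
    c * (u ^ 2 / ((1 + Real.exp a) * (1 + Real.exp (-a)))) := by
  rcases eq_or_ne u 0 with h0 | h0
  · exact ⟨1, by simp [h0], by simp [h0], by simp [h0]⟩
  have hEpos := Real.exp_pos a
  have hUpos := Real.exp_pos u
  have hMpos := Real.exp_pos (-u)
  have hMU : Real.exp (-u) * Real.exp u = 1 := by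
    rw [← Real.exp_add]; simp
  have hu1 : u + 1 ≤ Real.exp u := Real.add_one_le_exp u
  have hm1 : -u + 1 ≤ Real.exp (-u) := Real.add_one_le_exp (-u)
  set E := Real.exp a with hE
  set U := Real.exp u with hU
  set M := Real.exp (-u) with hM
  have h1 : (0:ℝ) < 1 + E := by linarith
  have h2 : (0:ℝ) < 1 + E * U := by positivity
  have hq : U - 1 ≤ u * U := by nlinarith [mul_le_mul_of_nonneg_right hm1 hUpos.le]
  have hp : u ≤ U - 1 := by linarith
  have hs1 : 0 ≤ u * (1 - M) := by
    rcases lt_or_gt_of_ne h0 with hu | hu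
    · have : 1 ≤ M := by nlinarith
      nlinarith
    · have : M ≤ 1 := by nlinarith
      nlinarith
  have hs2 : 0 ≤ u * (U - 1) := by
    rcases lt_or_gt_of_ne h0 with hu | hu
    · nlinarith
    · nlinarith
  -- the two core inequalities
  have key1 : M * (u * (1 + E * U)) ≤ (U - 1) * (1 + E) := by
    have h4 : M * (u * (1 + E * U)) = M * u + u * E := by
      linear_combination u * E * hMU
    rw [h4]
    nlinarith [mul_nonneg (by linarith : (0:ℝ) ≤ U - 1 - u) hEpos.le]
  have key2 : (U - 1) * (1 + E) ≤ U * (u * (1 + E * U)) := by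
    nlinarith [mul_nonneg (by linarith : (0:ℝ) ≤ u * U - (U - 1)) hEpos.le,
      mul_nonneg (mul_nonneg hs2 hUpos.le) hEpos.le]
  refine ⟨(U - 1) * (1 + E) / (u * (1 + E * U)), ?_, ?_, ?_⟩
  · rcases lt_or_gt_of_ne h0 with hu | hu
    · rw [abs_of_neg hu, neg_neg, ← hU, le_div_iff_of_neg (by nlinarith)]
      exact key2
    · rw [abs_of_pos hu, ← hM, le_div_iff₀ (by positivity)]
      linarith [key1]
  · rcases lt_or_gt_of_ne h0 with hu | hu
    · rw [abs_of_neg hu, ← hM, div_le_iff_of_neg (by nlinarith)]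
      linarith [key1]
    · rw [abs_of_pos hu, ← hU, div_le_iff₀ (by positivity)]
      linarith [key2]
  · simp only [one_mul, neg_one_mul, Real.exp_neg, Real.exp_add, ← hE, ← hU]
    field_simp
    ring

/-- Key Bernstein-type property of the expected logistic gradient in the
well-specified logistic model (Proposition `propertyexpectedbound`).
The expectation over `y ∈ {-1,1}` with `P(y = s) = 1/(1+exp(-s θ_trueᵀX))`
is written out explicitly. -/
theorem expected_gradient_property {d : ℕ} (θ θtrue X : Fin d → ℝ) :
    ∃ c : ℝ,
      Real.exp (-|(θtrue - θ) ⬝ᵥ X|) ≤ c ∧ c ≤ Real.exp (|(θtrue - θ) ⬝ᵥ X|) ∧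
      (1 / (1 + Real.exp (-(θtrue ⬝ᵥ X)))) *
          ((1 : ℝ) * ((θtrue - θ) ⬝ᵥ X) / (1 + Real.exp ((1 : ℝ) * (θ ⬝ᵥ X)))) +
        (1 / (1 + Real.exp (θtrue ⬝ᵥ X))) *
          ((-1 : ℝ) * ((θtrue - θ) ⬝ᵥ X) / (1 + Real.exp ((-1 : ℝ) * (θ ⬝ᵥ X)))) =
      c * (((θtrue - θ) ⬝ᵥ X) ^ 2 /
        ((1 + Real.exp (θ ⬝ᵥ X)) * (1 + Real.exp (-(θ ⬝ᵥ X))))) := by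
  have ht : θtrue ⬝ᵥ X = θ ⬝ᵥ X + (θtrue - θ) ⬝ᵥ X := by
    rw [sub_dotProduct]; ring
  rw [ht]
  exact aux_expgrad (θ ⬝ᵥ X) ((θtrue - θ) ⬝ᵥ X)
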